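/- For each d ∈ ℕ there exists k = k(d) ∈ ℕ such that the following holds: for every rank-d lattice L in ℝ^d (a subgroup of ℝ^d generated by an ℝ-basis of ℝ^d) and every finite subgroup P of the orthogonal group O(d), the collection of subgroups Γ of the group of affine isometries of ℝ^d whose lattice of translations L_Γ equals L and whose point group P_Γ equals P has at most k equivalence classes under the equivalence in which Γ and Γ' are equivalent iff Γ' = t Γ t^{−1} for some translation t : x ↦ x + a with a ∈ ℝ^d. -/

import Mathlib

noncomputable section

/-- affine permutation `x ↦ A x + c`. -/
def affPerm {V : Type*} [AddGroup V] (A : Equiv.Perm V) (c : V) : Equiv.Perm V :=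
  A.trans (Equiv.addRight c)

@[simp] lemma affPerm_apply {V : Type*} [AddGroup V] (A : Equiv.Perm V) (c x : V) :
    affPerm A c x = A x + c := rfl

theorem aux_pow_entries {d : ℕ} (E : Matrix (Fin d) (Fin d) ℤ) (k : ℕ)
    (hk : ∀ i j, (3:ℤ)^k ∣ E i j) : ∀ m, 2 ≤ m → ∀ i j, (3:ℤ)^(2*k) ∣ (E^m) i j := by
  have h2 : ∀ i j, (3:ℤ)^(2*k) ∣ (E^2) i j := by
    intro i j
    rw [pow_two, Matrix.mul_apply]
    refine Finset.dvd_sum fun l _ => ?_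
    rw [two_mul, pow_add]
    exact mul_dvd_mul (hk i l) (hk l j)
  intro m hm i j
  obtain ⟨m, rfl⟩ := Nat.exists_eq_add_of_le hm
  induction m generalizing i j with
  | zero => exact h2 i j
  | succ m ih =>
    rw [← Nat.add_assoc, pow_succ, Matrix.mul_apply]
    exact Finset.dvd_sum fun l _ => dvd_mul_of_dvd_left (ih i l (Nat.le_add_right _ _)) _

theorem aux_prime_step {d p : ℕ} (hp : p.Prime) (C : Matrix (Fin d) (Fin d) ℤ)
    (hCp : C ^ p = 1) (k : ℕ) (hk1 : 1 ≤ k) (hk : ∀ i j, (3:ℤ)^k ∣ (C - 1) i j) :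
    ∀ i j, (3:ℤ)^(k+1) ∣ (C - 1) i j := by
  set E : Matrix (Fin d) (Fin d) ℤ := C - 1 with hE
  have hCE : C = E + 1 := by rw [hE, sub_add_cancel]
  have hbin : (E + 1) ^ p = ∑ m ∈ Finset.range (p + 1), p.choose m • E ^ m := by
    rw [(Commute.one_right E).add_pow]
    refine Finset.sum_congr rfl fun m _ => ?_
    rw [one_pow, mul_one, nsmul_eq_mul, (Nat.cast_commute _ _).eq]
  have h2p : 2 ≤ p := hp.two_le
  have hsplit : ∑ m ∈ Finset.range (p + 1), p.choose m • E ^ m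
      = 1 + p • E + ∑ m ∈ Finset.Ico 2 (p + 1), p.choose m • E ^ m := by
    rw [Finset.range_eq_Ico, Finset.sum_eq_sum_Ico_succ_bot (by omega),
      Finset.sum_eq_sum_Ico_succ_bot (by omega)]
    simp [add_assoc]
  have hkey : p • E + ∑ m ∈ Finset.Ico 2 (p + 1), p.choose m • E ^ m = 0 := by
    have : (1 : Matrix (Fin d) (Fin d) ℤ) = C ^ p := hCp.symm
    rw [hCE, hbin, hsplit] at this
    rw [add_assoc] at this
    exact (left_eq_add.mp this)
  intro i j
  have hent : (p : ℤ) * E i j = -∑ m ∈ Finset.Ico 2 (p + 1), (p.choose m : ℤ) * (E ^ m) i j := by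
    have := congrArg (fun M => M i j) hkey
    simp only [Matrix.add_apply, Matrix.sum_apply, Matrix.smul_apply, Matrix.zero_apply] at this
    simp only [nsmul_eq_mul] at this
    linarith [this]
  have hS : (3:ℤ)^(2*k) ∣ ∑ m ∈ Finset.Ico 2 (p + 1), (p.choose m : ℤ) * (E ^ m) i j := by
    refine Finset.dvd_sum fun m hm => Dvd.dvd.mul_left ?_ _
    exact aux_pow_entries E k hk m (Finset.mem_Ico.mp hm).1 i j
  have hpe : (3:ℤ)^(2*k) ∣ (p : ℤ) * E i j := by rw [hent]; exact dvd_neg.mpr hS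
  have hk2 : k + 1 ≤ 2 * k := by omega
  by_cases h3 : p = 3
  · subst h3
    have hS2 : ∑ m ∈ Finset.Ico 2 (3 + 1), (Nat.choose 3 m : ℤ) * (E ^ m) i j
        = 3 * (E ^ 2) i j + (E ^ 3) i j := by
      norm_num [Finset.sum_Ico_eq_sum_range, Finset.sum_range_succ]
    have hE3 : (3:ℤ)^(3*k) ∣ (E ^ 3) i j := by
      have : E ^ 3 = E * E ^ 2 := by rw [pow_succ']
      rw [this, Matrix.mul_apply]
      refine Finset.dvd_sum fun l _ => ?_
      have : (3:ℤ)^(3*k) = 3^k * 3^(2*k) := by rw [← pow_add]; ring_nf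
      rw [this]
      refine mul_dvd_mul (hk i l) ?_
      exact aux_pow_entries E k hk 2 le_rfl l j
    have hE2 : (3:ℤ)^(2*k) ∣ (E ^ 2) i j := aux_pow_entries E k hk 2 le_rfl i j
    have hent' : (3:ℤ) * E i j = -(3 * (E ^ 2) i j + (E ^ 3) i j) := by
      rw [← hS2]; exact_mod_cast hent
    have hdvd : (3:ℤ)^(2*k+1) ∣ 3 * E i j := by
      rw [hent']
      have h1 : (3:ℤ)^(2*k+1) ∣ 3 * (E ^ 2) i j := by
        rw [pow_succ, mul_comm ((3:ℤ)^(2*k)) 3]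
        exact mul_dvd_mul_left 3 hE2
      have h2 : (3:ℤ)^(2*k+1) ∣ (E ^ 3) i j :=
        dvd_trans (pow_dvd_pow 3 (by omega)) hE3
      exact dvd_neg.mpr (h1.add h2)
    have : (3:ℤ)^(2*k) ∣ E i j := by
      have h33 : (3:ℤ)^(2*k+1) = 3 * 3^(2*k) := by rw [pow_succ]; ring
      rw [h33] at hdvd
      exact (mul_dvd_mul_iff_left (by norm_num : (3:ℤ) ≠ 0)).mp hdvd
    exact dvd_trans (pow_dvd_pow 3 hk2) this
  · have hcop : IsCoprime ((3:ℤ)^(2*k)) (p : ℤ) := by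
      refine IsCoprime.pow_left ?_
      rw [Int.isCoprime_iff_gcd_eq_one]
      have : Nat.Coprime 3 p := (Nat.coprime_primes (by norm_num) hp).mpr (fun h => h3 h.symm)
      simpa [Int.gcd] using this
    exact dvd_trans (pow_dvd_pow 3 hk2) (hcop.dvd_of_dvd_mul_left hpe)

theorem aux_pow_congr {d : ℕ} (C : Matrix (Fin d) (Fin d) ℤ)
    (h3 : ∀ i j, (3:ℤ) ∣ (C - 1) i j) : ∀ (q : ℕ) (i j : Fin d), (3:ℤ) ∣ (C ^ q - 1) i j := by
  intro q
  induction q with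
  | zero => simp
  | succ q ih =>
    have hdec : C ^ (q+1) - 1 = (C ^ q - 1) * C + (C - 1) := by
      rw [pow_succ]; noncomm_ring
    intro i j
    rw [hdec, Matrix.add_apply, Matrix.mul_apply]
    exact (Finset.dvd_sum fun l _ => dvd_mul_of_dvd_left (ih i l) _).add (h3 i j)

theorem aux_prime_case {d p : ℕ} (hp : p.Prime) (C : Matrix (Fin d) (Fin d) ℤ)
    (hCp : C ^ p = 1) (h3 : ∀ i j, (3:ℤ) ∣ (C - 1) i j) : C = 1 := by
  have hall : ∀ n, ∀ i j, (3:ℤ)^(n+1) ∣ (C - 1) i j := by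
    intro n
    induction n with
    | zero => simpa using h3
    | succ n ih => exact aux_prime_step hp C hCp (n+1) (by omega) ih
  have hzero : ∀ i j, (C - 1) i j = 0 := by
    intro i j
    by_contra h
    set N := (C - 1) i j with hN
    have h1 : (3:ℤ)^(N.natAbs + 1) ≤ |N| :=
      Int.le_of_dvd (abs_pos.mpr h) ((dvd_abs _ _).mpr (hall N.natAbs i j))
    have h2 : (N.natAbs : ℤ) < (3:ℤ)^(N.natAbs + 1) := by
      have := Nat.lt_pow_self (n := N.natAbs) (by norm_num : 1 < 3)
      calc (N.natAbs : ℤ) < (3:ℕ)^N.natAbs := by exact_mod_cast this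
        _ ≤ (3:ℤ)^(N.natAbs+1) := by
            push_cast
            exact pow_le_pow_right₀ (by norm_num) (by omega)
    rw [Int.abs_eq_natAbs] at h1
    omega
  have : C - 1 = 0 := by ext i j; exact hzero i j
  exact sub_eq_zero.mp this

theorem aux_finite_order {d : ℕ} (m : ℕ) (hm : 0 < m) (C : Matrix (Fin d) (Fin d) ℤ)
    (hCm : C ^ m = 1) (h3 : ∀ i j, (3:ℤ) ∣ (C - 1) i j) : C = 1 := by
  induction m using Nat.strong_induction_on generalizing C with
  | _ m ih =>
    rcases eq_or_ne m 1 with rfl | hne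
    · simpa using hCm
    · obtain ⟨p, hp, q, rfl⟩ := Nat.exists_prime_and_dvd hne
      have hq : 0 < q := by
        rcases Nat.eq_zero_or_pos q with h | h
        · subst h; simp at hm
        · exact h
      have h1 : (C ^ q) ^ p = 1 := by rw [← pow_mul, mul_comm]; exact hCm
      have h3q : ∀ i j, (3:ℤ) ∣ (C ^ q - 1) i j := aux_pow_congr C h3 q
      have hCq : C ^ q = 1 := aux_prime_case hp (C ^ q) h1 h3q
      have hqlt : q < p * q := by
        have := hp.two_le
        nlinarith
      exact ih q hqlt hq C hCq h3

theorem perm_linear {d : ℕ} (A : Equiv.Perm (EuclideanSpace ℝ (Fin d)))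
    (hiso : ∀ x y, dist (A x) (A y) = dist x y) (h0 : A 0 = 0) :
    ∃ e : EuclideanSpace ℝ (Fin d) ≃ₗᵢ[ℝ] EuclideanSpace ℝ (Fin d), ∀ x, e x = A x := by
  have hI : Isometry (A : EuclideanSpace ℝ (Fin d) → EuclideanSpace ℝ (Fin d)) :=
    Isometry.of_dist_eq hiso
  let e0 : EuclideanSpace ℝ (Fin d) ≃ᵢ EuclideanSpace ℝ (Fin d) := ⟨A, hI⟩
  refine ⟨e0.toRealLinearIsometryEquivOfMapZero h0, fun x => ?_⟩
  rw [IsometryEquiv.coe_toRealLinearIsometryEquivOfMapZero]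
  rfl

theorem addsubgroup_closure_eq_span {V : Type*} [AddCommGroup V] (s : Set V) :
    AddSubgroup.closure s = (Submodule.span ℤ s).toAddSubgroup := by
  apply le_antisymm
  · exact AddSubgroup.closure_le _ |>.2 (Submodule.subset_span)
  · intro x hx
    have : Submodule.span ℤ s ≤ AddSubgroup.toIntSubmodule (AddSubgroup.closure s) :=
      Submodule.span_le.2 AddSubgroup.subset_closure
    exact this hx

end

/-- The group of (surjective) isometries of `ℝ^d`, as a subgroup of the permutations of `ℝ^d`.
(Every surjective isometry of a Euclidean space is automatically affine, so this is the group
of affine isometries of `ℝ^d`.) -/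
def isomPermGroup (d : ℕ) : Subgroup (Equiv.Perm (EuclideanSpace ℝ (Fin d))) where
  carrier := {π | ∀ x y, dist (π x) (π y) = dist x y}
  one_mem' := by intro x y; simp
  mul_mem' := by
    intro π σ hπ hσ x y
    simpa [Equiv.Perm.mul_apply] using (hπ (σ x) (σ y)).trans (hσ x y)
  inv_mem' := by
    intro π hπ x y
    simpa using (hπ (π⁻¹ x) (π⁻¹ y)).symm

/-- **Theorem (Bieberbach-type finiteness, following the proof of Bieberbach's third theorem).**
For each `d ∈ ℕ` there is `k = k(d) ∈ ℕ` such that for every rank-`d` lattice `L` in `ℝ^d`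
(the subgroup generated by an `ℝ`-basis of `ℝ^d`) and every finite subgroup `P` of `O(d)`
(realised as isometries fixing `0`), the subgroups `Γ` of the group of affine isometries of
`ℝ^d` with lattice of translations `L_Γ = L` and point group `P_Γ = P` fall into at most `k`
classes under conjugation by translations `x ↦ x + a`, `a ∈ ℝ^d`. -/
theorem bieberbach_finiteness (d : ℕ) :
    ∃ k : ℕ,
      ∀ (b : Module.Basis (Fin d) ℝ (EuclideanSpace ℝ (Fin d)))
        (L : AddSubgroup (EuclideanSpace ℝ (Fin d))),
        L = AddSubgroup.closure (Set.range b) →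
        ∀ P : Subgroup (Equiv.Perm (EuclideanSpace ℝ (Fin d))),
          P ≤ isomPermGroup d → (∀ A ∈ P, A 0 = 0) → Finite P →
          ∃ R : Finset (Subgroup (Equiv.Perm (EuclideanSpace ℝ (Fin d)))),
            R.card ≤ k ∧
            ∀ Γ : Subgroup (Equiv.Perm (EuclideanSpace ℝ (Fin d))),
              Γ ≤ isomPermGroup d →
              (∀ v : EuclideanSpace ℝ (Fin d), Equiv.addRight v ∈ Γ ↔ v ∈ L) →
              (∀ A : Equiv.Perm (EuclideanSpace ℝ (Fin d)),
                A ∈ P ↔ ∃ φ ∈ Γ, ∀ x, φ x = A x + φ 0) →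
              ∃ Γ' ∈ R, ∃ a : EuclideanSpace ℝ (Fin d),
                Γ = Subgroup.map (MulAut.conj (Equiv.addRight a)).toMonoidHom Γ' := by
  classical
  set N : ℕ := 3 ^ (d * d) with hN
  refine ⟨(N ^ d + 1) ^ N, ?_⟩
  intro b L hLb P hPiso hP0 hPfin
  by_cases hex : ∃ Γ : Subgroup (Equiv.Perm (EuclideanSpace ℝ (Fin d))),
      Γ ≤ isomPermGroup d ∧
      (∀ v : EuclideanSpace ℝ (Fin d), Equiv.addRight v ∈ Γ ↔ v ∈ L) ∧
      (∀ A : Equiv.Perm (EuclideanSpace ℝ (Fin d)),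
        A ∈ P ↔ ∃ φ ∈ Γ, ∀ x, φ x = A x + φ 0)
  swap
  · refine ⟨∅, by simp, ?_⟩
    intro Γ h1 h2 h3
    exact absurd ⟨Γ, h1, h2, h3⟩ hex
  have : Fintype ↥P := Fintype.ofFinite ↥P
  set n : ℕ := Fintype.card ↥P with hn
  have hn1 : 1 ≤ n := Fintype.card_pos
  -- linear structure of point-group elements
  have hlin : ∀ A : ↥P, ∃ e : EuclideanSpace ℝ (Fin d) ≃ₗᵢ[ℝ] EuclideanSpace ℝ (Fin d),
      ∀ x, e x = (A : Equiv.Perm (EuclideanSpace ℝ (Fin d))) x :=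
    fun A => perm_linear _ (hPiso A.2) (hP0 _ A.2)
  choose ef hef using hlin
  -- membership in L via integer coordinates
  have hLmem : ∀ x : EuclideanSpace ℝ (Fin d),
      x ∈ L ↔ ∃ c : Fin d → ℤ, ∑ i, c i • b i = x := by
    intro x
    rw [hLb, addsubgroup_closure_eq_span, Submodule.mem_toAddSubgroup,
      Submodule.mem_span_range_iff_exists_fun ℤ]
  -- structure of admissible groups
  have struct : ∀ Γ : Subgroup (Equiv.Perm (EuclideanSpace ℝ (Fin d))),
      Γ ≤ isomPermGroup d →
      (∀ v : EuclideanSpace ℝ (Fin d), Equiv.addRight v ∈ Γ ↔ v ∈ L) →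
      (∀ A : Equiv.Perm (EuclideanSpace ℝ (Fin d)),
        A ∈ P ↔ ∃ φ ∈ Γ, ∀ x, φ x = A x + φ 0) →
      ∃ t0 : ↥P → EuclideanSpace ℝ (Fin d),
        (∀ φ, φ ∈ Γ ↔ ∃ (A : ↥P) (w : EuclideanSpace ℝ (Fin d)), w ∈ L ∧
          φ = affPerm (A : Equiv.Perm (EuclideanSpace ℝ (Fin d))) (t0 A + w)) ∧
        (∀ A B : ↥P, (A : Equiv.Perm (EuclideanSpace ℝ (Fin d))) (t0 B) + t0 A - t0 (A*B) ∈ L) ∧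
        (∀ A : ↥P, ∀ v ∈ L, (A : Equiv.Perm (EuclideanSpace ℝ (Fin d))) v ∈ L) := by
    intro Γ hiso hL hP
    have hphi : ∀ A : ↥P, ∃ φ, φ ∈ Γ ∧
        ∀ x, φ x = (A : Equiv.Perm (EuclideanSpace ℝ (Fin d))) x + φ 0 := by
      intro A
      obtain ⟨φ, h1, h2⟩ := (hP A).mp A.2
      exact ⟨φ, h1, h2⟩
    choose φf hφmem hφeq using hphi
    have sameLin : ∀ (A φ ψ : Equiv.Perm (EuclideanSpace ℝ (Fin d))),
        φ ∈ Γ → ψ ∈ Γ → (∀ x, φ x = A x + φ 0) → (∀ x, ψ x = A x + ψ 0) →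
        φ 0 - ψ 0 ∈ L := by
      intro A φ ψ hφ hψ h1 h2
      have hinv : ∀ x, ψ⁻¹ x = A⁻¹ (x - ψ 0) := by
        intro x
        have h3 : ψ (A⁻¹ (x - ψ 0)) = x := by
          rw [h2, show A (A⁻¹ (x - ψ 0)) = x - ψ 0 from Equiv.apply_symm_apply A _]; abel
        calc ψ⁻¹ x = ψ⁻¹ (ψ (A⁻¹ (x - ψ 0))) := by rw [h3]
        _ = A⁻¹ (x - ψ 0) := Equiv.symm_apply_apply ψ _
      have heq : φ * ψ⁻¹ = Equiv.addRight (φ 0 - ψ 0) := by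
        apply Equiv.ext; intro x
        rw [Equiv.Perm.mul_apply, hinv, h1, show A (A⁻¹ (x - ψ 0)) = x - ψ 0 from Equiv.apply_symm_apply A _]
        show x - ψ 0 + φ 0 = x + (φ 0 - ψ 0)
        abel
      have hmem : Equiv.addRight (φ 0 - ψ 0) ∈ Γ := heq ▸ mul_mem hφ (inv_mem hψ)
      exact (hL _).mp hmem
    refine ⟨fun A => φf A 0, ?_, ?_, ?_⟩
    · intro φ
      constructor
      · intro hφ
        set A0 : Equiv.Perm (EuclideanSpace ℝ (Fin d)) :=
          φ.trans (Equiv.addRight (-(φ 0))) with hA0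
        have hA0app : ∀ x, A0 x = φ x + -(φ 0) := fun x => rfl
        have hform : ∀ x, φ x = A0 x + φ 0 := by intro x; rw [hA0app]; abel
        have hA0P : A0 ∈ P := (hP A0).mpr ⟨φ, hφ, hform⟩
        have hw : φ 0 - φf ⟨A0, hA0P⟩ 0 ∈ L :=
          sameLin A0 φ (φf ⟨A0, hA0P⟩) hφ (hφmem _) hform (hφeq ⟨A0, hA0P⟩)
        refine ⟨⟨A0, hA0P⟩, φ 0 - φf ⟨A0, hA0P⟩ 0, hw, ?_⟩
        apply Equiv.ext; intro x
        rw [affPerm_apply]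
        rw [hform x]
        show A0 x + φ 0 = A0 x + (φf ⟨A0, hA0P⟩ 0 + (φ 0 - φf ⟨A0, hA0P⟩ 0))
        abel
      · rintro ⟨A, w, hwL, rfl⟩
        have heq : affPerm (A : Equiv.Perm (EuclideanSpace ℝ (Fin d))) (φf A 0 + w)
            = Equiv.addRight w * φf A := by
          apply Equiv.ext; intro x
          simp only [affPerm_apply, Equiv.Perm.mul_apply, Equiv.coe_addRight, hφeq A x]
          abel
        rw [heq]
        exact mul_mem ((hL w).mpr hwL) (hφmem A)
    · intro A B
      have hψ0 : (φf A * φf B) 0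
          = (A : Equiv.Perm (EuclideanSpace ℝ (Fin d))) (φf B 0) + φf A 0 := by
        rw [Equiv.Perm.mul_apply, hφeq A]
      have hform : ∀ x, (φf A * φf B) x
          = ((A*B : ↥P) : Equiv.Perm (EuclideanSpace ℝ (Fin d))) x + (φf A * φf B) 0 := by
        intro x
        rw [Equiv.Perm.mul_apply, hφeq A, hφeq B, hψ0]
        have hadd : (A : Equiv.Perm (EuclideanSpace ℝ (Fin d)))
              ((B : Equiv.Perm (EuclideanSpace ℝ (Fin d))) x + φf B 0)
            = (A : Equiv.Perm (EuclideanSpace ℝ (Fin d)))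
              ((B : Equiv.Perm (EuclideanSpace ℝ (Fin d))) x)
            + (A : Equiv.Perm (EuclideanSpace ℝ (Fin d))) (φf B 0) := by
          rw [← hef A, ← hef A, ← hef A, map_add]
        rw [hadd]
        have hcoe : ((A*B : ↥P) : Equiv.Perm (EuclideanSpace ℝ (Fin d))) x
            = (A : Equiv.Perm (EuclideanSpace ℝ (Fin d)))
              ((B : Equiv.Perm (EuclideanSpace ℝ (Fin d))) x) := rfl
        rw [hcoe]
        abel
      have hmain := sameLin ((A*B : ↥P) : Equiv.Perm (EuclideanSpace ℝ (Fin d)))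
        (φf A * φf B) (φf (A*B)) (mul_mem (hφmem A) (hφmem B)) (hφmem (A*B))
        hform (hφeq (A*B))
      rw [hψ0] at hmain
      exact hmain
    · intro A v hv
      have hg : φf A * Equiv.addRight v * (φf A)⁻¹
          = Equiv.addRight ((A : Equiv.Perm (EuclideanSpace ℝ (Fin d))) v) := by
        apply Equiv.ext; intro x
        simp only [Equiv.Perm.mul_apply, Equiv.coe_addRight]
        have h1 : φf A ((φf A)⁻¹ x + v)
            = (A : Equiv.Perm (EuclideanSpace ℝ (Fin d))) ((φf A)⁻¹ x + v) + φf A 0 :=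
          hφeq A _
        have h2 : (A : Equiv.Perm (EuclideanSpace ℝ (Fin d))) ((φf A)⁻¹ x + v)
            = (A : Equiv.Perm (EuclideanSpace ℝ (Fin d))) ((φf A)⁻¹ x)
            + (A : Equiv.Perm (EuclideanSpace ℝ (Fin d))) v := by
          rw [← hef A, ← hef A, ← hef A, map_add]
        have h3 : x = (A : Equiv.Perm (EuclideanSpace ℝ (Fin d))) ((φf A)⁻¹ x) + φf A 0 := by
          have h4 := hφeq A ((φf A)⁻¹ x)
          rw [show φf A ((φf A)⁻¹ x) = x from Equiv.apply_symm_apply _ _] at h4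
          exact h4
        rw [h1, h2]
        conv_rhs => rw [h3]
        abel
      have hmem : Equiv.addRight ((A : Equiv.Perm (EuclideanSpace ℝ (Fin d))) v) ∈ Γ :=
        hg ▸ mul_mem (mul_mem (hφmem A) ((hL v).mpr hv)) (inv_mem (hφmem A))
      exact (hL _).mp hmem
  -- bound on the order of the point group, via `Γ₀`
  have hnN : n ≤ N := by
    obtain ⟨Γ₀, hΓ₀iso, hΓ₀L, hΓ₀P⟩ := hex
    obtain ⟨t0₀, -, -, hAL⟩ := struct Γ₀ hΓ₀iso hΓ₀L hΓ₀P
    have hbL : ∀ (A : ↥P) (j : Fin d),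
        (A : Equiv.Perm (EuclideanSpace ℝ (Fin d))) (b j) ∈ L := fun A j =>
      hAL A (b j) (by rw [hLb]; exact AddSubgroup.subset_closure ⟨j, rfl⟩)
    have hco0 : ∀ (A : ↥P) (j : Fin d), ∃ c : Fin d → ℤ,
        ∑ i, c i • b i = (A : Equiv.Perm (EuclideanSpace ℝ (Fin d))) (b j) :=
      fun A j => (hLmem _).mp (hbL A j)
    choose co hco using hco0
    have uniq : ∀ c c' : Fin d → ℤ,
        (∑ i, c i • b i : EuclideanSpace ℝ (Fin d)) = ∑ i, c' i • b i → c = c' := by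
      intro c c' h
      have hcast : ∀ (cc : ℤ) (x : EuclideanSpace ℝ (Fin d)), cc • x = ((cc:ℝ)) • x :=
        fun cc x => (Int.cast_smul_eq_zsmul ℝ cc x).symm
      have h0 : ∑ i, (((c i : ℝ)) - ((c' i : ℝ))) • b i = 0 := by
        simp only [sub_smul]
        rw [Finset.sum_sub_distrib]
        rw [sub_eq_zero]
        calc ∑ i, ((c i : ℝ)) • b i = ∑ i, c i • b i :=
              (Finset.sum_congr rfl fun i _ => (hcast _ _).symm)
          _ = ∑ i, c' i • b i := h
          _ = ∑ i, ((c' i : ℝ)) • b i := Finset.sum_congr rfl fun i _ => (hcast _ _)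
      have hli := Fintype.linearIndependent_iff.mp b.linearIndependent
          (fun i => ((c i : ℝ)) - ((c' i : ℝ))) h0
      funext i
      have := hli i
      rw [sub_eq_zero] at this
      exact_mod_cast this
    have hlinA : ∀ (A : ↥P) (cc : Fin d → ℤ),
        (A : Equiv.Perm (EuclideanSpace ℝ (Fin d))) (∑ l, cc l • b l)
          = ∑ l, cc l • ((A : Equiv.Perm (EuclideanSpace ℝ (Fin d))) (b l)) := by
      intro A cc
      rw [← hef A, map_sum]
      exact Finset.sum_congr rfl fun l _ => by rw [map_zsmul, hef A]
    set mat : ↥P → Matrix (Fin d) (Fin d) ℤ := fun A => Matrix.of fun i j => co A j i with hmat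
    have hmat_mul : ∀ A B : ↥P, mat (A*B) = mat A * mat B := by
      intro A B
      have key : ∀ j, (∑ i, (∑ l, co A l i * co B j l) • b i : EuclideanSpace ℝ (Fin d))
          = ((A*B : ↥P) : Equiv.Perm (EuclideanSpace ℝ (Fin d))) (b j) := by
        intro j
        calc ∑ i, (∑ l, co A l i * co B j l) • b i
            = ∑ i, ∑ l, (co A l i * co B j l) • b i := by
              exact Finset.sum_congr rfl fun i _ => Finset.sum_smul
          _ = ∑ l, ∑ i, (co A l i * co B j l) • b i := Finset.sum_comm
          _ = ∑ l, co B j l • ∑ i, co A l i • b i := by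
              refine Finset.sum_congr rfl fun l _ => ?_
              rw [Finset.smul_sum]
              refine Finset.sum_congr rfl fun i _ => ?_
              rw [smul_smul, mul_comm]
          _ = ∑ l, co B j l • ((A : Equiv.Perm (EuclideanSpace ℝ (Fin d))) (b l)) := by
              exact Finset.sum_congr rfl fun l _ => by rw [hco A l]
          _ = (A : Equiv.Perm (EuclideanSpace ℝ (Fin d))) (∑ l, co B j l • b l) :=
              (hlinA A _).symm
          _ = (A : Equiv.Perm (EuclideanSpace ℝ (Fin d)))
                ((B : Equiv.Perm (EuclideanSpace ℝ (Fin d))) (b j)) := by rw [hco B j]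
          _ = ((A*B : ↥P) : Equiv.Perm (EuclideanSpace ℝ (Fin d))) (b j) := rfl
      have hcoAB : ∀ j, co (A*B) j = fun i => ∑ l, co A l i * co B j l :=
        fun j => uniq _ _ ((hco (A*B) j).trans (key j).symm)
      ext i j
      rw [Matrix.mul_apply]
      show co (A*B) j i = _
      rw [hcoAB j]
      rfl
    have hmat_one : mat 1 = 1 := by
      have h1 : ∀ j, co (1 : ↥P) j = fun i => if j = i then 1 else 0 := by
        intro j
        apply uniq
        rw [hco 1 j]
        simp [ite_smul]
      ext i j
      show co 1 j i = (1 : Matrix (Fin d) (Fin d) ℤ) i j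
      rw [h1 j]
      simp [Matrix.one_apply, eq_comm]
    let ρ : ↥P →* Matrix (Fin d) (Fin d) ℤ :=
      { toFun := mat, map_one' := hmat_one, map_mul' := hmat_mul }
    have hmat_inj : Function.Injective mat := by
      intro A B h
      have hbj : ∀ j, (A : Equiv.Perm (EuclideanSpace ℝ (Fin d))) (b j)
          = (B : Equiv.Perm (EuclideanSpace ℝ (Fin d))) (b j) := by
        intro j
        rw [← hco A j, ← hco B j]
        refine Finset.sum_congr rfl fun i _ => ?_
        have : co A j i = co B j i := by
          have := congrArg (fun M => M i j) h
          exact this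
        rw [this]
      have hlm : (ef A).toLinearEquiv.toLinearMap = (ef B).toLinearEquiv.toLinearMap := by
        apply b.ext
        intro j
        show ef A (b j) = ef B (b j)
        rw [hef A, hef B, hbj j]
      have hAB : ∀ x, (A : Equiv.Perm (EuclideanSpace ℝ (Fin d))) x
          = (B : Equiv.Perm (EuclideanSpace ℝ (Fin d))) x := by
        intro x
        calc (A : Equiv.Perm (EuclideanSpace ℝ (Fin d))) x = ef A x := (hef A x).symm
          _ = ef B x := LinearMap.congr_fun hlm x
          _ = (B : Equiv.Perm (EuclideanSpace ℝ (Fin d))) x := hef B x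
      exact Subtype.ext (Equiv.ext hAB)
    let red : Matrix (Fin d) (Fin d) ℤ →* Matrix (Fin d) (Fin d) (ZMod 3) :=
      ((Int.castRingHom (ZMod 3)).mapMatrix : Matrix (Fin d) (Fin d) ℤ →+* _).toMonoidHom
    have hinj3 : Function.Injective (fun A : ↥P => red (ρ A)) := by
      intro A B h
      simp only [] at h
      have hg3 : red (ρ (A⁻¹ * B)) = 1 := by
        rw [map_mul, map_mul, ← h, ← map_mul, ← map_mul, inv_mul_cancel, map_one, map_one]
      set g := A⁻¹ * B with hgdef
      have hm : 0 < orderOf g := orderOf_pos g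
      have hpow : (ρ g) ^ (orderOf g) = 1 := by rw [← map_pow, pow_orderOf_eq_one, map_one]
      have h3 : ∀ i j, (3:ℤ) ∣ (ρ g - 1) i j := by
        intro i j
        have hij := congrArg (fun M => M i j) hg3
        have hentry : ((ρ g i j : ℤ) : ZMod 3) = (((1 : Matrix (Fin d) (Fin d) ℤ) i j : ℤ) : ZMod 3) := by
          have hl : red (ρ g) i j = ((ρ g i j : ℤ) : ZMod 3) := rfl
          have hr : (1 : Matrix (Fin d) (Fin d) (ZMod 3)) i j
              = (((1 : Matrix (Fin d) (Fin d) ℤ) i j : ℤ) : ZMod 3) := by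
            by_cases hij' : i = j <;> simp [Matrix.one_apply, hij']
          rw [← hl, ← hr]
          exact hij
        have : (((ρ g - 1) i j : ℤ) : ZMod 3) = 0 := by
          rw [Matrix.sub_apply, Int.cast_sub, hentry, sub_self]
        exact_mod_cast (ZMod.intCast_zmod_eq_zero_iff_dvd _ 3).mp this
      have hg1 : ρ g = 1 := aux_finite_order (orderOf g) hm (ρ g) hpow h3
      have hgone : g = 1 := hmat_inj (hg1.trans hmat_one.symm)
      exact inv_mul_eq_one.mp hgone
    have hcard := Nat.card_le_card_of_injective _ hinj3
    calc n = Nat.card ↥P := Nat.card_eq_fintype_card.symm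
      _ ≤ Nat.card (Matrix (Fin d) (Fin d) (ZMod 3)) := hcard
      _ = N := by
          rw [hN]
          simp [Nat.card_eq_fintype_card, Matrix]
          ring
  -- the finite set of candidate translation vectors
  set F : Finset (EuclideanSpace ℝ (Fin d)) :=
    Finset.image (fun c : Fin d → Fin n => (n : ℝ)⁻¹ • ∑ i, ((c i : ℕ) : ℝ) • b i)
      Finset.univ with hF
  set F0 : Finset (EuclideanSpace ℝ (Fin d)) := insert 0 F with hF0
  -- reduction of (1/n)L modulo L to representatives in F
  have hrep : ∀ w : EuclideanSpace ℝ (Fin d), n • w ∈ L → ∃ u ∈ F, w - u ∈ L := by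
    intro w hw
    obtain ⟨m, hm⟩ := (hLmem _).mp hw
    set r : Fin d → ℤ := fun i => m i % n with hrdef
    set q : Fin d → ℤ := fun i => m i / n with hqdef
    have hnz : (0:ℤ) < (n:ℤ) := by exact_mod_cast hn1
    have hr0 : ∀ i, 0 ≤ r i := fun i => Int.emod_nonneg _ (by omega)
    have hrlt : ∀ i, r i < n := fun i => Int.emod_lt_of_pos _ hnz
    have hnR : ((n:ℝ)) ≠ 0 := by positivity
    set u : EuclideanSpace ℝ (Fin d) := (n : ℝ)⁻¹ • ∑ i, ((r i : ℝ)) • b i with hu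
    have hmemF : u ∈ F := by
      rw [hF]
      refine Finset.mem_image.mpr ⟨fun i => ⟨(r i).toNat, ?_⟩, Finset.mem_univ _, ?_⟩
      · have := hr0 i; have := hrlt i; omega
      · rw [hu]
        congr 1
        refine Finset.sum_congr rfl fun i _ => ?_
        congr 1
        have h := Int.toNat_of_nonneg (hr0 i)
        exact_mod_cast congrArg (fun z : ℤ => (z : ℝ)) h
    refine ⟨u, hmemF, ?_⟩
    rw [hLmem]
    refine ⟨q, ?_⟩
    have hcast : ∀ (c : ℤ) (x : EuclideanSpace ℝ (Fin d)), c • x = ((c:ℝ)) • x :=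
      fun c x => (Int.cast_smul_eq_zsmul ℝ c x).symm
    have hnu : (n:ℝ) • u = ∑ i, ((r i : ℝ)) • b i := by
      rw [hu, smul_inv_smul₀ hnR]
    have hnw : (n:ℝ) • w = ∑ i, ((m i : ℝ)) • b i := by
      rw [Nat.cast_smul_eq_nsmul ℝ n w, ← hm]
      exact Finset.sum_congr rfl fun i _ => (hcast _ _)
    have key : (n:ℝ) • (∑ i, ((q i : ℝ)) • b i) = (n:ℝ) • (w - u) := by
      rw [smul_sub, hnu, hnw, Finset.smul_sum, ← Finset.sum_sub_distrib]
      refine Finset.sum_congr rfl fun i _ => ?_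
      rw [smul_smul, ← sub_smul]
      congr 1
      have : m i - r i = (n:ℤ) * q i := by
        have := Int.mul_ediv_add_emod (m i) (n:ℤ)
        rw [hrdef, hqdef]
        simp only []
        omega
      exact_mod_cast this.symm
    have := smul_right_injective (EuclideanSpace ℝ (Fin d)) hnR key
    rw [← this]
    exact Finset.sum_congr rfl fun i _ => (hcast _ _)
  -- generating sets for the candidate groups
  set Sgen : (↥P → EuclideanSpace ℝ (Fin d)) → Set (Equiv.Perm (EuclideanSpace ℝ (Fin d))) :=
    fun t => {g | (∃ A : ↥P, g = affPerm (A : Equiv.Perm (EuclideanSpace ℝ (Fin d))) (t A)) ∨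
      ∃ v ∈ L, g = Equiv.addRight v} with hSgen
  refine ⟨Finset.image
      (fun f : ↥P → ↥F0 => Subgroup.closure (Sgen (fun A => (f A : EuclideanSpace ℝ (Fin d)))))
      Finset.univ, ?_, ?_⟩
  · -- cardinality bound
    have hF0card : F0.card ≤ N ^ d + 1 := by
      have h1 : F0.card ≤ F.card + 1 := Finset.card_insert_le 0 F
      have h2 : F.card ≤ Fintype.card (Fin d → Fin n) := by
        rw [hF]
        exact (Finset.card_image_le).trans (le_of_eq (Finset.card_univ))
      have h3 : Fintype.card (Fin d → Fin n) = n ^ d := by simp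
      have h4 : n ^ d ≤ N ^ d := Nat.pow_le_pow_left hnN d
      omega
    calc (Finset.image
        (fun f : ↥P → ↥F0 => Subgroup.closure
          (Sgen (fun A => (f A : EuclideanSpace ℝ (Fin d))))) Finset.univ).card
        ≤ (Finset.univ : Finset (↥P → ↥F0)).card := Finset.card_image_le
      _ = Fintype.card (↥P → ↥F0) := Finset.card_univ
      _ = F0.card ^ n := by simp [Fintype.card_fun, Fintype.card_coe, hn]
      _ ≤ (N ^ d + 1) ^ n := Nat.pow_le_pow_left hF0card n
      _ ≤ (N ^ d + 1) ^ N := Nat.pow_le_pow_right (by positivity) hnN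
  intro Γ hΓiso hΓL hΓP
  obtain ⟨t0, hchar, hcoc, hAL⟩ := struct Γ hΓiso hΓL hΓP
  -- averaging
  set s : EuclideanSpace ℝ (Fin d) := ∑ B : ↥P, t0 B with hs
  set a : EuclideanSpace ℝ (Fin d) := (n : ℝ)⁻¹ • s with ha
  set t1 : ↥P → EuclideanSpace ℝ (Fin d) :=
    fun A => t0 A + (A : Equiv.Perm (EuclideanSpace ℝ (Fin d))) a - a with ht1
  have hnR' : ((n:ℝ)) ≠ 0 := by positivity
  have hnt1 : ∀ A : ↥P, n • t1 A ∈ L := by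
    intro A
    have hsum : ∑ B : ↥P, ((A : Equiv.Perm (EuclideanSpace ℝ (Fin d))) (t0 B) + t0 A - t0 (A*B)) ∈ L :=
      AddSubgroup.sum_mem L (fun B _ => hcoc A B)
    have h1 : ∑ B : ↥P, t0 (A*B) = s :=
      Fintype.sum_equiv (Equiv.mulLeft A) _ _ (fun B => rfl)
    have h2 : ∑ B : ↥P, (A : Equiv.Perm (EuclideanSpace ℝ (Fin d))) (t0 B)
        = (A : Equiv.Perm (EuclideanSpace ℝ (Fin d))) s := by
      calc ∑ B : ↥P, (A : Equiv.Perm (EuclideanSpace ℝ (Fin d))) (t0 B)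
          = ∑ B : ↥P, ef A (t0 B) := Finset.sum_congr rfl fun B _ => (hef A _).symm
        _ = ef A (∑ B : ↥P, t0 B) := (map_sum _ _ _).symm
        _ = (A : Equiv.Perm (EuclideanSpace ℝ (Fin d))) s := by rw [hef A]
    have h3 : ∑ _B : ↥P, t0 A = n • t0 A := by
      rw [Finset.sum_const, Finset.card_univ]
    have hsum2 : (A : Equiv.Perm (EuclideanSpace ℝ (Fin d))) s + n • t0 A - s ∈ L := by
      have hh : ∑ B : ↥P, ((A : Equiv.Perm (EuclideanSpace ℝ (Fin d))) (t0 B) + t0 A - t0 (A*B))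
          = (A : Equiv.Perm (EuclideanSpace ℝ (Fin d))) s + n • t0 A - s := by
        rw [Finset.sum_sub_distrib, Finset.sum_add_distrib, h1, h2, h3]
      rwa [hh] at hsum
    have hAa : (A : Equiv.Perm (EuclideanSpace ℝ (Fin d))) a
        = (n:ℝ)⁻¹ • (A : Equiv.Perm (EuclideanSpace ℝ (Fin d))) s := by
      rw [ha, ← hef A, map_smul, hef A]
    have hna : n • a = s := by
      rw [ha, ← Nat.cast_smul_eq_nsmul ℝ, smul_inv_smul₀ hnR']
    have hnAa : n • ((A : Equiv.Perm (EuclideanSpace ℝ (Fin d))) a)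
        = (A : Equiv.Perm (EuclideanSpace ℝ (Fin d))) s := by
      rw [hAa, ← Nat.cast_smul_eq_nsmul ℝ, smul_inv_smul₀ hnR']
    have heq : n • t1 A = (A : Equiv.Perm (EuclideanSpace ℝ (Fin d))) s + n • t0 A - s := by
      show n • (t0 A + (A : Equiv.Perm (EuclideanSpace ℝ (Fin d))) a - a) = _
      rw [smul_sub, smul_add, hnAa, hna]
      abel
    rw [heq]
    exact hsum2
  have hrep' : ∀ A : ↥P, ∃ u ∈ F, t1 A - u ∈ L := fun A => hrep (t1 A) (hnt1 A)
  choose u2 hu2F hu2L using hrep'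
  set f : ↥P → ↥F0 := fun A => ⟨u2 A, Finset.mem_insert_of_mem (hu2F A)⟩ with hf
  refine ⟨Subgroup.closure (Sgen (fun A => (f A : EuclideanSpace ℝ (Fin d)))),
    Finset.mem_image.mpr ⟨f, Finset.mem_univ f, rfl⟩, a, ?_⟩
  set κ : Equiv.Perm (EuclideanSpace ℝ (Fin d)) →* Equiv.Perm (EuclideanSpace ℝ (Fin d)) :=
    (MulAut.conj (Equiv.addRight a)).toMonoidHom with hκ
  have hκ_apply : ∀ (σ : Equiv.Perm (EuclideanSpace ℝ (Fin d))) x, κ σ x = σ (x - a) + a := by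
    intro σ x
    show (Equiv.addRight a * σ * (Equiv.addRight a)⁻¹) x = _
    have hinv : (Equiv.addRight a)⁻¹ = Equiv.addRight (-a) := by
      apply Equiv.ext; intro y; simp [Equiv.Perm.inv_def]
    rw [hinv]
    simp [Equiv.Perm.mul_apply, Equiv.coe_addRight, sub_eq_add_neg]
  have hκ_aff : ∀ (A : ↥P) (c : EuclideanSpace ℝ (Fin d)),
      κ (affPerm (A : Equiv.Perm (EuclideanSpace ℝ (Fin d))) c)
        = affPerm (A : Equiv.Perm (EuclideanSpace ℝ (Fin d)))
            (c + a - (A : Equiv.Perm (EuclideanSpace ℝ (Fin d))) a) := by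
    intro A c
    apply Equiv.ext; intro x
    rw [hκ_apply, affPerm_apply, affPerm_apply]
    have hsub : (A : Equiv.Perm (EuclideanSpace ℝ (Fin d))) (x - a)
        = (A : Equiv.Perm (EuclideanSpace ℝ (Fin d))) x
          - (A : Equiv.Perm (EuclideanSpace ℝ (Fin d))) a := by
      rw [← hef A, ← hef A, ← hef A, map_sub]
    rw [hsub]
    abel
  have hκ_tr : ∀ v : EuclideanSpace ℝ (Fin d), κ (Equiv.addRight v) = Equiv.addRight v := by
    intro v
    apply Equiv.ext; intro x
    rw [hκ_apply]
    simp only [Equiv.coe_addRight]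
    abel
  apply le_antisymm
  · intro φ hφ
    obtain ⟨A, w, hwL, rfl⟩ := (hchar φ).mp hφ
    set w2 : EuclideanSpace ℝ (Fin d) := w + (t1 A - u2 A) with hw2
    have hw2L : w2 ∈ L := AddSubgroup.add_mem L hwL (hu2L A)
    refine Subgroup.mem_map.mpr
      ⟨Equiv.addRight w2 * affPerm (A : Equiv.Perm (EuclideanSpace ℝ (Fin d))) (u2 A), ?_, ?_⟩
    · refine Subgroup.mul_mem _ (Subgroup.subset_closure ?_) (Subgroup.subset_closure ?_)
      · exact Or.inr ⟨w2, hw2L, rfl⟩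
      · exact Or.inl ⟨A, rfl⟩
    · rw [map_mul, hκ_tr, hκ_aff]
      apply Equiv.ext; intro x
      simp only [Equiv.Perm.mul_apply, affPerm_apply, Equiv.coe_addRight]
      have ht1A : t1 A = t0 A + (A : Equiv.Perm (EuclideanSpace ℝ (Fin d))) a - a := rfl
      rw [hw2, ht1A]
      abel
  · refine (Subgroup.map_le_iff_le_comap).mpr ((Subgroup.closure_le _).mpr ?_)
    rintro g (⟨A, rfl⟩ | ⟨v, hv, rfl⟩)
    · show affPerm _ _ ∈ Subgroup.comap κ Γ
      rw [Subgroup.mem_comap, hκ_aff]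
      apply (hchar _).mpr
      refine ⟨A, u2 A + a - (A : Equiv.Perm (EuclideanSpace ℝ (Fin d))) a - t0 A, ?_, ?_⟩
      · have heq2 : u2 A + a - (A : Equiv.Perm (EuclideanSpace ℝ (Fin d))) a - t0 A
            = -(t1 A - u2 A) := by
          have ht1A : t1 A = t0 A + (A : Equiv.Perm (EuclideanSpace ℝ (Fin d))) a - a := rfl
          rw [ht1A]
          abel
        rw [heq2]
        exact AddSubgroup.neg_mem L (hu2L A)
      · congr 1
        abel
    · show Equiv.addRight v ∈ Subgroup.comap κ Γ
      rw [Subgroup.mem_comap, hκ_tr]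
      exact (hΓL v).mpr hv
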